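/- Define the stopping time τ^μ := inf{ t ∈ ℕ : g^μ(S_t) ≥ Y_t }. Then: (a) for every c ∈ ℝ, P( sup_{s ≤ τ^μ} Y_s ≥ c ) ≤ Leb{ ξ ∈ (0,1] : SQ^μ(ξ) ≥ c }, i.e., the maximum of Y up to τ^μ is stochastically dominated by the Hardy–Littlewood transform SQ^μ(𝒰) of μ, where 𝒰 is uniform on (0,1]; and (b) for every c ∈ ℝ, P( τ^μ < ∞ and Y_{τ^μ} ≥ c ) ≤ μ̄(c), i.e., the stopped statistic Y_{τ^μ} is stochastically dominated by μ. -/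

import Mathlib

open MeasureTheory Filter Set
open scoped Topology ENNReal NNReal

/-- The running maximum `S t = max_{s ≤ t} M s`. -/
noncomputable def runMax {Ω : Type*} (M : ℕ → Ω → ℝ) (t : ℕ) (ω : Ω) : ℝ :=
  (Finset.range (t + 1)).sup' (Finset.nonempty_range_iff.mpr (Nat.succ_ne_zero t))
    (fun s => M s ω)

/-- The ultimate supremum `S_∞ = sup_t M_t`. -/
noncomputable def supAll {Ω : Type*} (M : ℕ → Ω → ℝ) (ω : Ω) : ℝ :=
  ⨆ t : ℕ, M t ω

/-- `𝒢 s = ∫_0^1 g(s/u) du`. -/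
noncomputable def calG (g : ℝ → ℝ) (s : ℝ) : ℝ :=
  ∫ u in Set.Ioc (0 : ℝ) 1, g (s / u)

/-- `𝒢′ s = ∫_s^∞ (g(x) − g(s))/x² dx`. -/
noncomputable def calG' (g : ℝ → ℝ) (s : ℝ) : ℝ :=
  ∫ x in Set.Ioi s, (g x - g s) / x ^ 2

/-- The Azéma–Yor process `Y t = 𝒢(S t) − (S t − M t)·𝒢′(S t)`. -/
noncomputable def ayProc {Ω : Type*} (g : ℝ → ℝ) (M : ℕ → Ω → ℝ) (t : ℕ) (ω : Ω) : ℝ :=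
  calG g (runMax M t ω) - (runMax M t ω - M t ω) * calG' g (runMax M t ω)

/-- Complementary CDF `μ̄(x) = μ([x,∞))`. -/
noncomputable def cCDF (μ : Measure ℝ) (x : ℝ) : ℝ := (μ (Set.Ici x)).toReal

/-- Tail quantile function `μ̄⁻¹(ξ) = inf{x ≥ 0 : μ̄(x) < ξ}`. -/
noncomputable def tailQuantile (μ : Measure ℝ) (ξ : ℝ) : ℝ :=
  sInf {x : ℝ | 0 ≤ x ∧ cCDF μ x < ξ}

/-- Superquantile `SQ(ξ) = (1/ξ) ∫_0^ξ μ̄⁻¹(λ) dλ`. -/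
noncomputable def superQuantile (μ : Measure ℝ) (ξ : ℝ) : ℝ :=
  (1 / ξ) * ∫ l in Set.Ioc (0 : ℝ) ξ, tailQuantile μ l

/-- `g^μ(x) = μ̄⁻¹(1/x)`. -/
noncomputable def gMu (μ : Measure ℝ) (x : ℝ) : ℝ := tailQuantile μ (1 / x)

/-- The stopping time `τ^μ = inf{t : g^μ(S_t) ≥ Y_t}`, valued in `ℕ ∪ {∞}`. -/
noncomputable def tauMu {Ω : Type*} (μ : Measure ℝ) (M : ℕ → Ω → ℝ) (ω : Ω) : ℕ∞ :=
  ⨅ t ∈ {t : ℕ | ayProc (gMu μ) M t ω ≤ gMu μ (runMax M t ω)}, (t : ℕ∞)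


section Aux

open scoped ENNReal NNReal Topology

variable {μ : Measure ℝ} [IsProbabilityMeasure μ]

lemma tq_nonneg (ξ : ℝ) : 0 ≤ tailQuantile μ ξ :=
  Real.sInf_nonneg fun _ hx => hx.1

lemma tq_bddBelow (ξ : ℝ) : BddBelow {x : ℝ | 0 ≤ x ∧ cCDF μ x < ξ} :=
  ⟨0, fun _ hx => hx.1⟩

lemma tq_set_nonempty {ξ : ℝ} (hξ : 0 < ξ) :
    {x : ℝ | 0 ≤ x ∧ cCDF μ x < ξ}.Nonempty := by
  have hIci : (⋂ n : ℕ, Set.Ici (n : ℝ)) = (∅ : Set ℝ) := by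
    ext x
    simp only [Set.mem_iInter, Set.mem_Ici, Set.mem_empty_iff_false, iff_false, not_forall]
    obtain ⟨n, hn⟩ := exists_nat_gt x
    exact ⟨n, not_le.2 hn⟩
  have htend : Tendsto (fun n : ℕ => μ (Set.Ici (n : ℝ))) atTop (𝓝 0) := by
    have := tendsto_measure_iInter_atTop (μ := μ) (s := fun n : ℕ => Set.Ici (n : ℝ))
      (fun n => measurableSet_Ici.nullMeasurableSet)
      (fun n m hnm => Set.Ici_subset_Ici.2 (by exact_mod_cast hnm))
      ⟨0, measure_ne_top _ _⟩
    rwa [hIci, measure_empty] at this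
  have : ∀ᶠ n : ℕ in atTop, μ (Set.Ici (n : ℝ)) < ENNReal.ofReal ξ :=
    htend.eventually_lt_const (by simp [ENNReal.ofReal_pos, hξ])
  obtain ⟨n, hn⟩ := this.exists
  exact ⟨n, Nat.cast_nonneg n, ENNReal.toReal_lt_of_lt_ofReal hn⟩

lemma tq_antitone {a b : ℝ} (ha : 0 < a) (hab : a ≤ b) :
    tailQuantile μ b ≤ tailQuantile μ a :=
  csInf_le_csInf (tq_bddBelow b) (tq_set_nonempty ha)
    (fun x hx => ⟨hx.1, hx.2.trans_le hab⟩)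

lemma tq_le {ξ x : ℝ} (hx : 0 ≤ x) (h : cCDF μ x < ξ) : tailQuantile μ ξ ≤ x :=
  csInf_le (tq_bddBelow ξ) ⟨hx, h⟩

lemma le_cCDF_of_lt_tq {ξ x : ℝ} (hx : 0 ≤ x) (h : x < tailQuantile μ ξ) :
    ξ ≤ cCDF μ x := by
  by_contra hlt
  exact absurd (tq_le hx (not_le.1 hlt)) (not_le.2 h)

lemma tq_integrableOn (hsupp : μ (Set.Iio 0) = 0) (hmean : Integrable id μ) : IntegrableOn (tailQuantile μ) (Set.Ioc (0:ℝ) 1) volume := by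
  have hqm : Monotone (fun y : ℝ => tailQuantile μ (Real.exp (-y))) := fun y z hyz =>
    tq_antitone (Real.exp_pos _) (Real.exp_le_exp.2 (neg_le_neg hyz))
  have hmeas : Measurable (fun y : ℝ => tailQuantile μ (Real.exp (-y))) := hqm.measurable
  have haem : AEMeasurable (tailQuantile μ) (volume.restrict (Set.Ioc (0:ℝ) 1)) := by
    have hae : ∀ᵐ l ∂(volume.restrict (Set.Ioc (0:ℝ) 1)),
        (fun y : ℝ => tailQuantile μ (Real.exp (-y))) (-Real.log l) = tailQuantile μ l := by
      refine (ae_restrict_iff' measurableSet_Ioc).2 (ae_of_all _ fun l hl => ?_)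
      simp only [neg_neg, Real.exp_log hl.1]
    exact (hmeas.comp (measurable_neg.comp Real.measurable_log)).aemeasurable.congr hae
  refine ⟨haem.aestronglyMeasurable, ?_⟩
  rw [hasFiniteIntegral_iff_norm]
  have hcongr : ∀ l : ℝ, ENNReal.ofReal ‖tailQuantile μ l‖ = ENNReal.ofReal (tailQuantile μ l) := by
    intro l; rw [Real.norm_of_nonneg (tq_nonneg l)]
  simp_rw [hcongr]
  rw [lintegral_eq_lintegral_meas_lt _ (ae_of_all _ fun l => tq_nonneg l) haem]
  have hb : ∫⁻ t in Set.Ioi (0:ℝ), (volume.restrict (Set.Ioc (0:ℝ) 1)) {l | t < tailQuantile μ l}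
      ≤ ∫⁻ t in Set.Ioi (0:ℝ), μ (Set.Ici t) := by
    refine setLIntegral_mono_ae' measurableSet_Ioi (ae_of_all _ fun t ht => ?_)
    rw [Measure.restrict_apply' measurableSet_Ioc]
    have hsub : {l | t < tailQuantile μ l} ∩ Set.Ioc (0:ℝ) 1 ⊆ Set.Ioc 0 (cCDF μ t) := by
      rintro l ⟨hl1, hl2⟩
      exact ⟨hl2.1, le_cCDF_of_lt_tq (le_of_lt ht) hl1⟩
    calc volume ({l | t < tailQuantile μ l} ∩ Set.Ioc (0:ℝ) 1) ≤ volume (Set.Ioc 0 (cCDF μ t)) :=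
          measure_mono hsub
      _ = ENNReal.ofReal (cCDF μ t) := by rw [Real.volume_Ioc, sub_zero]
      _ = μ (Set.Ici t) := ENNReal.ofReal_toReal (measure_ne_top _ _)
  refine lt_of_le_of_lt hb ?_
  have hnn : (0 : ℝ → ℝ) ≤ᵐ[μ] id := by
    rw [Filter.EventuallyLE, ae_iff]
    have : {x : ℝ | ¬ (0:ℝ → ℝ) x ≤ id x} = Set.Iio 0 := by
      ext x; simp [not_le]
    rw [this]; exact hsupp
  have hid : ∫⁻ x, ENNReal.ofReal (id x) ∂μ = ∫⁻ t in Set.Ioi (0:ℝ), μ (Set.Ici t) := by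
    rw [lintegral_eq_lintegral_meas_le μ hnn measurable_id.aemeasurable]
    simp only [id_eq]
    rfl
  rw [← hid]
  calc ∫⁻ x, ENNReal.ofReal (id x) ∂μ ≤ ∫⁻ x, (‖x‖₊ : ℝ≥0∞) ∂μ := by
        refine lintegral_mono fun x => ?_
        rw [← enorm_eq_nnnorm, Real.enorm_eq_ofReal_abs]
        exact ENNReal.ofReal_le_ofReal (le_abs_self x)
    _ < ⊤ := by
        have := hmean.hasFiniteIntegral
        rwa [HasFiniteIntegral] at this

lemma sq_antitone (hsupp : μ (Set.Iio 0) = 0) (hmean : Integrable id μ)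
    {a b : ℝ} (ha : 0 < a) (hab : a ≤ b) (hb1 : b ≤ 1) :
    superQuantile μ b ≤ superQuantile μ a := by
  have hb : 0 < b := lt_of_lt_of_le ha hab
  have I1 : IntegrableOn (tailQuantile μ) (Set.Ioc 0 a) volume :=
    (tq_integrableOn hsupp hmean).mono_set (Set.Ioc_subset_Ioc_right (hab.trans hb1))
  have I2 : IntegrableOn (tailQuantile μ) (Set.Ioc a b) volume :=
    (tq_integrableOn hsupp hmean).mono_set (fun x hx => ⟨ha.trans hx.1, hx.2.trans hb1⟩)
  have hsplit : ∫ l in Set.Ioc (0:ℝ) b, tailQuantile μ l =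
      (∫ l in Set.Ioc (0:ℝ) a, tailQuantile μ l) + ∫ l in Set.Ioc a b, tailQuantile μ l := by
    rw [← setIntegral_union (Set.Ioc_disjoint_Ioc_of_le le_rfl) measurableSet_Ioc I1 I2,
      Set.Ioc_union_Ioc_eq_Ioc ha.le hab]
  have h1 : ∫ l in Set.Ioc a b, tailQuantile μ l ≤ (b - a) * tailQuantile μ a := by
    calc ∫ l in Set.Ioc a b, tailQuantile μ l ≤ ∫ _ in Set.Ioc a b, tailQuantile μ a := by
          refine setIntegral_mono_on I2 (integrableOn_const measure_Ioc_lt_top.ne) measurableSet_Ioc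
            (fun l hl => tq_antitone ha hl.1.le)
      _ = (b - a) * tailQuantile μ a := by
          rw [setIntegral_const, Real.volume_real_Ioc_of_le hab, smul_eq_mul]
  have h2 : a * tailQuantile μ a ≤ ∫ l in Set.Ioc (0:ℝ) a, tailQuantile μ l := by
    calc a * tailQuantile μ a = ∫ _ in Set.Ioc (0:ℝ) a, tailQuantile μ a := by
          rw [setIntegral_const, Real.volume_real_Ioc_of_le ha.le, sub_zero,
            smul_eq_mul]
      _ ≤ ∫ l in Set.Ioc (0:ℝ) a, tailQuantile μ l := by
          refine setIntegral_mono_on (integrableOn_const measure_Ioc_lt_top.ne) I1 measurableSet_Ioc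
            (fun l hl => tq_antitone hl.1 hl.2)
  rw [superQuantile, superQuantile, hsplit]
  set I := ∫ l in Set.Ioc (0:ℝ) a, tailQuantile μ l
  set J := ∫ l in Set.Ioc a b, tailQuantile μ l
  rw [div_mul_eq_mul_div, div_mul_eq_mul_div, div_le_div_iff₀ hb ha, one_mul, one_mul]
  have htq : 0 ≤ tailQuantile μ a := tq_nonneg a
  nlinarith [mul_le_mul_of_nonneg_left h1 ha.le, mul_le_mul_of_nonneg_left h2 (sub_nonneg.2 hab)]

lemma calG_eq (s : ℝ) (hs : 0 < s) :
    (∫ u in Set.Ioc (0:ℝ) 1, tailQuantile μ (1 / (s / u))) = superQuantile μ (1 / s) := by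
  have hrw : ∀ u : ℝ, tailQuantile μ (1 / (s / u)) = tailQuantile μ (u / s) := by
    intro u; rw [one_div_div]
  simp_rw [hrw]
  have hmem : ∀ u : ℝ, u / s ∈ Set.Ioc (0:ℝ) (1 / s) ↔ u ∈ Set.Ioc (0:ℝ) 1 := by
    intro u
    simp only [Set.mem_Ioc]
    constructor
    · rintro ⟨h1, h2⟩
      exact ⟨by rwa [← zero_div s, div_lt_div_iff_of_pos_right hs] at h1,
        by rwa [div_le_div_iff_of_pos_right hs] at h2⟩
    · rintro ⟨h1, h2⟩
      exact ⟨by rwa [← zero_div s, div_lt_div_iff_of_pos_right hs], by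
        rwa [div_le_div_iff_of_pos_right hs]⟩
  have key : (∫ u in Set.Ioc (0:ℝ) 1, tailQuantile μ (u / s))
      = ∫ u : ℝ, (Set.Ioc (0:ℝ) (1/s)).indicator (tailQuantile μ) (u / s) := by
    rw [← integral_indicator measurableSet_Ioc]
    congr 1
    funext u
    by_cases hu : u ∈ Set.Ioc (0:ℝ) 1
    · rw [Set.indicator_of_mem hu, Set.indicator_of_mem ((hmem u).2 hu)]
    · rw [Set.indicator_of_notMem hu, Set.indicator_of_notMem (fun h => hu ((hmem u).1 h))]
  rw [key]
  have : (fun u : ℝ => (Set.Ioc (0:ℝ) (1/s)).indicator (tailQuantile μ) (u / s))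
      = fun u : ℝ => (Set.Ioc (0:ℝ) (1/s)).indicator (tailQuantile μ) (u * s⁻¹) := by
    funext u; rw [div_eq_mul_inv u s]
  rw [this, MeasureTheory.Measure.integral_comp_inv_mul_right
    ((Set.Ioc (0:ℝ) (1/s)).indicator (tailQuantile μ)) s]
  rw [integral_indicator measurableSet_Ioc, superQuantile, one_div_one_div,
    abs_of_pos hs, smul_eq_mul]


lemma calG_gMu_eq (μ : Measure ℝ) [IsProbabilityMeasure μ] (s : ℝ) (hs : 0 < s) :
    calG (gMu μ) s = superQuantile μ (1 / s) := by
  rw [calG]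
  simp only [gMu]
  exact calG_eq s hs

lemma calG'_nonneg (μ : Measure ℝ) [IsProbabilityMeasure μ] {s : ℝ} (hs : 0 < s) :
    0 ≤ calG' (gMu μ) s := by
  rw [calG']
  refine setIntegral_nonneg measurableSet_Ioi fun x hx => ?_
  have hxpos : 0 < x := hs.trans hx
  refine div_nonneg (sub_nonneg.2 ?_) (sq_nonneg x)
  exact tq_antitone (one_div_pos.2 hxpos) (one_div_le_one_div_of_le hs hx.le)

section RunMax

variable {Ω : Type*} {M : ℕ → Ω → ℝ}

lemma le_runMax {t s : ℕ} (hst : s ≤ t) (ω : Ω) : M s ω ≤ runMax M t ω := by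
  rw [runMax]
  exact Finset.le_sup' (fun s => M s ω) (Finset.mem_range.2 (Nat.lt_succ_of_le hst))

lemma runMax_le {t : ℕ} {ω : Ω} {K : ℝ} (h : ∀ s, M s ω ≤ K) : runMax M t ω ≤ K := by
  rw [runMax]
  exact Finset.sup'_le _ (fun s => M s ω) fun s _ => h s

lemma exists_runMax_eq (t : ℕ) (ω : Ω) : ∃ s, runMax M t ω = M s ω := by
  rw [runMax]
  obtain ⟨b, _, hb⟩ := Finset.exists_mem_eq_sup' (Finset.nonempty_range_iff.mpr
    (Nat.succ_ne_zero t)) (fun s => M s ω)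
  exact ⟨b, hb⟩

end RunMax

end Aux

/-- The maximum of `Y` up to `τ^μ` is stochastically dominated by the Hardy–Littlewood
transform of `μ`, and the stopped statistic `Y_{τ^μ}` is stochastically dominated by `μ`. -/
theorem stmt15 {Ω : Type*} {m0 : MeasurableSpace Ω} {P : Measure Ω} [IsProbabilityMeasure P]
    (ℱ : Filtration ℕ m0) (M : ℕ → Ω → ℝ)
    (hsuper : Supermartingale M ℱ P) (hnonneg : ∀ t ω, 0 ≤ M t ω)
    (hone : ∀ ω, M 0 ω = 1)
    (μ : Measure ℝ) [IsProbabilityMeasure μ]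
    (hsupp : μ (Set.Iio 0) = 0) (hmean : Integrable id μ) :
    (∀ c : ℝ,
      P {ω | (c : EReal) ≤
          ⨆ s : {s : ℕ // (s : ℕ∞) ≤ tauMu μ M ω}, ((ayProc (gMu μ) M s.1 ω : ℝ) : EReal)}
        ≤ volume {ξ : ℝ | ξ ∈ Set.Ioc (0 : ℝ) 1 ∧ c ≤ superQuantile μ ξ})
    ∧ (∀ c : ℝ,
        P {ω | tauMu μ M ω ≠ ⊤ ∧ c ≤ ayProc (gMu μ) M (tauMu μ M ω).toNat ω}
          ≤ μ (Set.Ici c)) := by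
  classical
  have hMmeas : ∀ t, Measurable (M t) := fun t =>
    ((hsuper.stronglyAdapted t).measurable).mono (ℱ.le t) le_rfl
  have hint0 : ∫ ω, M 0 ω ∂P = 1 := by simp [hone]
  -- Ville's inequality for nonnegative supermartingales
  have ville : ∀ K : ℝ, 0 < K → P {ω | ∃ t, K ≤ M t ω} ≤ ENNReal.ofReal (1 / K) := by
    intro K hK
    set B : ℕ → Set Ω := fun n => ⋃ (t : ℕ) (_ : t ≤ n), (M t) ⁻¹' (Set.Ici K) with hB
    have hBmeas : ∀ n, MeasurableSet (B n) := fun n =>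
      MeasurableSet.iUnion fun t => MeasurableSet.iUnion fun _ =>
        (hMmeas t) measurableSet_Ici
    have hstep : ∀ n, P (B n) ≤ ENNReal.ofReal (1 / K) := by
      intro n
      set σ : Ω → ℕ := hittingBtwn M (Set.Ici K) 0 n with hσdef
      have hσ : IsStoppingTime ℱ (fun ω => (σ ω : WithTop ℕ)) :=
        Adapted.isStoppingTime_hittingBtwn hsuper.stronglyAdapted.adapted measurableSet_Ici
      have hσ_le : ∀ ω, σ ω ≤ n := fun ω => hittingBtwn_le ω
      have hsv_int : Integrable (stoppedValue M (fun ω => (σ ω : WithTop ℕ))) P :=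
        integrable_stoppedValue ℕ hσ hsuper.integrable (N := n) (fun ω => WithTop.coe_le_coe.2 (hσ_le ω))
      have hOST : ∫ ω, stoppedValue M (fun ω => (σ ω : WithTop ℕ)) ω ∂P ≤ 1 := by
        have hneg := (hsuper.neg).expected_stoppedValue_mono
          (isStoppingTime_const ℱ 0) hσ (fun ω => WithTop.coe_le_coe.2 (Nat.zero_le _))
            (N := n) (fun ω => WithTop.coe_le_coe.2 (hσ_le ω))
        have e1 : stoppedValue (-M) (fun _ => WithTop.some (0:ℕ)) = fun ω => -(M 0 ω) := by
          funext ω; simp [stoppedValue]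
        have e2 : stoppedValue (-M) (fun ω => (σ ω : WithTop ℕ)) =
            fun ω => -(stoppedValue M (fun ω => (σ ω : WithTop ℕ)) ω) := by
          funext ω; simp [stoppedValue]
        rw [e1, e2, integral_neg, integral_neg, neg_le_neg_iff] at hneg
        exact le_of_le_of_eq hneg hint0
      have hind : (P (B n)).toReal * K ≤ 1 := by
        have hle : ∫ ω, (B n).indicator (fun _ => K) ω ∂P ≤ ∫ ω, stoppedValue M (fun ω => (σ ω : WithTop ℕ)) ω ∂P := by
          refine integral_mono ((integrable_const K).indicator (hBmeas n)) hsv_int fun ω => ?_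
          by_cases hω : ω ∈ B n
          · rw [Set.indicator_of_mem hω]
            have hmem : M (σ ω) ω ∈ Set.Ici K := by
              refine hittingBtwn_mem_set ?_
              simp only [hB, Set.mem_iUnion, Set.mem_preimage] at hω
              obtain ⟨t, ht, hKt⟩ := hω
              exact ⟨t, ⟨Nat.zero_le _, ht⟩, hKt⟩
            exact hmem
          · rw [Set.indicator_of_notMem hω]
            exact hnonneg _ ω
        rw [integral_indicator_const (K : ℝ) (hBmeas n), smul_eq_mul] at hle
        exact le_trans hle hOST
      have htR : (P (B n)).toReal ≤ 1 / K := (le_div_iff₀ hK).2 hind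
      calc P (B n) = ENNReal.ofReal ((P (B n)).toReal) :=
            (ENNReal.ofReal_toReal (measure_ne_top _ _)).symm
        _ ≤ ENNReal.ofReal (1 / K) := ENNReal.ofReal_le_ofReal htR
    have hUnion : {ω | ∃ t, K ≤ M t ω} = ⋃ n, B n := by
      ext ω
      simp only [hB, Set.mem_setOf_eq, Set.mem_iUnion, Set.mem_preimage, Set.mem_Ici]
      exact ⟨fun ⟨t, ht⟩ => ⟨t, t, le_rfl, ht⟩, fun ⟨n, t, _, ht⟩ => ⟨t, ht⟩⟩
    have hmono : Monotone B := by
      intro n m hnm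
      exact Set.iUnion₂_mono' fun t ht => ⟨t, ht.trans hnm, subset_rfl⟩
    rw [hUnion, hmono.measure_iUnion]
    exact iSup_le hstep
  constructor
  · -- part (a)
    intro c
    set A := {ξ : ℝ | ξ ∈ Set.Ioc (0:ℝ) 1 ∧ c ≤ superQuantile μ ξ} with hA
    set E := {ω | (c : EReal) ≤
        ⨆ s : {s : ℕ // (s : ℕ∞) ≤ tauMu μ M ω}, ((ayProc (gMu μ) M s.1 ω : ℝ) : EReal)} with hE
    show P E ≤ volume A
    set vA := volume A with hvA
    have hvA1 : vA ≤ 1 := by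
      calc vA ≤ volume (Set.Ioc (0:ℝ) 1) := measure_mono fun ξ hξ => hξ.1
        _ = 1 := by rw [Real.volume_Ioc]; simp
    have claim : ∀ K : ℝ, 0 < K → vA < ENNReal.ofReal (1 / K) →
        E ⊆ {ω | ∃ t, K ≤ M t ω} := by
      intro K hK hKv ω hω
      by_contra hBc
      simp only [Set.mem_setOf_eq, not_exists, not_le] at hBc
      have hK1 : 1 < K := by have := hBc 0; rwa [hone ω] at this
      have hKinv1 : 1 / K < 1 := by rwa [div_lt_one hK]
      have hKinvpos : 0 < 1 / K := one_div_pos.2 hK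
      have hYle : ∀ s : ℕ, ayProc (gMu μ) M s ω ≤ superQuantile μ (1 / K) := by
        intro s
        have hS1 : (1:ℝ) ≤ runMax M s ω := by
          have := le_runMax (M := M) (Nat.zero_le s) ω; rwa [hone ω] at this
        have hSpos : (0:ℝ) < runMax M s ω := lt_of_lt_of_le one_pos hS1
        have hSK : runMax M s ω ≤ K := runMax_le fun t => (hBc t).le
        have h1 : ayProc (gMu μ) M s ω ≤ calG (gMu μ) (runMax M s ω) := by
          rw [ayProc]
          have hm : 0 ≤ (runMax M s ω - M s ω) * calG' (gMu μ) (runMax M s ω) :=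
            mul_nonneg (sub_nonneg.2 (le_runMax le_rfl ω)) (calG'_nonneg μ hSpos)
          linarith
        have h2 : calG (gMu μ) (runMax M s ω) = superQuantile μ (1 / runMax M s ω) :=
          calG_gMu_eq μ _ hSpos
        have h3 : superQuantile μ (1 / runMax M s ω) ≤ superQuantile μ (1 / K) :=
          sq_antitone hsupp hmean hKinvpos (one_div_le_one_div_of_le hSpos hSK)
            ((div_le_one hSpos).2 hS1)
        exact (h1.trans_eq h2).trans h3
      have hsup : (⨆ s : {s : ℕ // (s : ℕ∞) ≤ tauMu μ M ω},
          ((ayProc (gMu μ) M s.1 ω : ℝ) : EReal)) ≤ ((superQuantile μ (1/K) : ℝ) : EReal) :=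
        iSup_le fun s => EReal.coe_le_coe_iff.2 (hYle s.1)
      have hc : c ≤ superQuantile μ (1 / K) := EReal.coe_le_coe_iff.1 (le_trans hω hsup)
      have hsubA : Set.Ioc (0:ℝ) (1 / K) ⊆ A := by
        intro ξ hξ
        exact ⟨⟨hξ.1, hξ.2.trans hKinv1.le⟩,
          le_trans hc (sq_antitone hsupp hmean hξ.1 hξ.2 hKinv1.le)⟩
      have hge : ENNReal.ofReal (1 / K) ≤ vA := by
        calc ENNReal.ofReal (1 / K) = volume (Set.Ioc (0:ℝ) (1/K)) := by
              rw [Real.volume_Ioc, sub_zero]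
          _ ≤ vA := measure_mono hsubA
      exact absurd hKv (not_lt.2 hge)
    by_contra hlt
    push_neg at hlt
    have hPE1 : P E ≤ 1 := prob_le_one
    have hvANt : vA ≠ ⊤ := (lt_of_le_of_lt hvA1 ENNReal.one_lt_top).ne
    have hPENt : P E ≠ ⊤ := (lt_of_le_of_lt hPE1 ENNReal.one_lt_top).ne
    have htlt : vA.toReal < (P E).toReal := (ENNReal.toReal_lt_toReal hvANt hPENt).2 hlt
    have hPEpos : 0 < (P E).toReal := lt_of_le_of_lt ENNReal.toReal_nonneg htlt
    set r := (vA.toReal + (P E).toReal) / 2 with hr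
    have hvAnn : 0 ≤ vA.toReal := ENNReal.toReal_nonneg
    have hr0 : 0 < r := by rw [hr]; linarith
    have hrlt : vA < ENNReal.ofReal r := by
      conv_lhs => rw [← ENNReal.ofReal_toReal hvANt]
      rw [ENNReal.ofReal_lt_ofReal_iff hr0]
      rw [hr]; linarith
    have hrgt : ENNReal.ofReal r < P E := by
      conv_rhs => rw [← ENNReal.ofReal_toReal hPENt]
      rw [ENNReal.ofReal_lt_ofReal_iff hPEpos]
      rw [hr]; linarith
    have hKpos : (0:ℝ) < 1 / r := one_div_pos.2 hr0
    have hsub := claim (1 / r) hKpos (by rwa [one_div_one_div])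
    have hfin := le_trans (measure_mono hsub) (ville (1 / r) hKpos)
    rw [one_div_one_div] at hfin
    exact absurd (lt_of_le_of_lt hfin hrgt) (lt_irrefl _)
  · -- part (b)
    intro c
    rcases le_or_gt c 0 with hc | hc
    · have h0 : μ (Set.Ici (0:ℝ)) = 1 := by
        rw [← Set.compl_Iio, measure_compl measurableSet_Iio (measure_ne_top _ _), hsupp,
          measure_univ, tsub_zero]
      calc P _ ≤ 1 := prob_le_one
        _ = μ (Set.Ici (0:ℝ)) := h0.symm
        _ ≤ μ (Set.Ici c) := measure_mono (Set.Ici_subset_Ici.2 hc)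
    · set E := {ω | tauMu μ M ω ≠ ⊤ ∧ c ≤ ayProc (gMu μ) M (tauMu μ M ω).toNat ω} with hE
      show P E ≤ μ (Set.Ici c)
      have key : ∀ ω ∈ E, ENNReal.ofReal (1 / runMax M (tauMu μ M ω).toNat ω) ≤ μ (Set.Ici c)
          ∧ (1:ℝ) ≤ runMax M ((tauMu μ M ω).toNat) ω := by
        rintro ω ⟨hτ, hcY⟩
        set t₀n := (tauMu μ M ω).toNat with ht0
        have hS1 : (1:ℝ) ≤ runMax M t₀n ω := by
          have := le_runMax (M := M) (Nat.zero_le t₀n) ω; rwa [hone ω] at this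
        refine ⟨?_, hS1⟩
        have hSpos : (0:ℝ) < runMax M t₀n ω := lt_of_lt_of_le one_pos hS1
        set T := {t : ℕ | ayProc (gMu μ) M t ω ≤ gMu μ (runMax M t ω)} with hT
        have hTne : T.Nonempty := by
          by_contra hne
          rw [Set.not_nonempty_iff_eq_empty] at hne
          apply hτ
          rw [tauMu, show {t : ℕ | ayProc (gMu μ) M t ω ≤ gMu μ (runMax M t ω)} = T from rfl, hne]
          simp
        have hτeq : tauMu μ M ω = ((sInf T : ℕ) : ℕ∞) := by
          refine le_antisymm (iInf₂_le _ (Nat.sInf_mem hTne)) (le_iInf₂ fun t ht => ?_)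
          exact_mod_cast Nat.sInf_le ht
        have ht0eq : t₀n = sInf T := by rw [ht0, hτeq]; simp
        have hmemT : ayProc (gMu μ) M t₀n ω ≤ gMu μ (runMax M t₀n ω) := by
          have := Nat.sInf_mem hTne
          rw [hT] at this
          rw [ht0eq]
          exact this
        have hcS : c ≤ tailQuantile μ (1 / runMax M t₀n ω) := le_trans hcY hmemT
        have hx : ∀ n : ℕ, ENNReal.ofReal (1 / runMax M t₀n ω)
            ≤ μ (Set.Ici (c - c / ((n:ℝ)+1))) := by
          intro n
          have hn1 : (0:ℝ) < (n:ℝ) + 1 := by positivity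
          have hn2 : (1:ℝ) ≤ (n:ℝ) + 1 := by
            have : (0:ℝ) ≤ (n:ℝ) := Nat.cast_nonneg n
            linarith
          have hx0 : 0 ≤ c - c / ((n:ℝ)+1) := by
            have := div_le_self hc.le hn2
            linarith
          have hxc : c - c / ((n:ℝ)+1) < c := by
            have := div_pos hc hn1
            linarith
          have hlt : c - c / ((n:ℝ)+1) < tailQuantile μ (1 / runMax M t₀n ω) :=
            lt_of_lt_of_le hxc hcS
          have hcc := le_cCDF_of_lt_tq hx0 hlt
          calc ENNReal.ofReal (1 / runMax M t₀n ω)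
              ≤ ENNReal.ofReal (cCDF μ (c - c/((n:ℝ)+1))) := ENNReal.ofReal_le_ofReal hcc
            _ = μ (Set.Ici (c - c/((n:ℝ)+1))) := ENNReal.ofReal_toReal (measure_ne_top _ _)
        have hInter : (⋂ n : ℕ, Set.Ici (c - c / ((n:ℝ)+1))) = Set.Ici c := by
          ext x
          simp only [Set.mem_iInter, Set.mem_Ici]
          constructor
          · intro h
            have h1 : Tendsto (fun n : ℕ => c / ((n:ℝ)+1)) atTop (𝓝 0) := by
              have h2 := tendsto_one_div_add_atTop_nhds_zero_nat.const_mul c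
              simpa [mul_one_div, div_eq_mul_inv] using h2
            have htend : Tendsto (fun n : ℕ => c - c / ((n:ℝ)+1)) atTop (𝓝 c) := by
              simpa using tendsto_const_nhds.sub h1
            exact le_of_tendsto htend (Filter.Eventually.of_forall h)
          · intro h n
            have h3 : (0:ℝ) ≤ c / ((n:ℝ)+1) := div_nonneg hc.le (by positivity)
            linarith
        have htmono : Antitone (fun n : ℕ => Set.Ici (c - c / ((n:ℝ)+1))) := by
          intro n m hnm
          apply Set.Ici_subset_Ici.2
          have hcast : ((n:ℝ)+1) ≤ ((m:ℝ)+1) := by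
            have : (n:ℝ) ≤ (m:ℝ) := Nat.cast_le.2 hnm
            linarith
          have hd : c / ((m:ℝ)+1) ≤ c / ((n:ℝ)+1) := by
            apply div_le_div_of_nonneg_left hc.le (by positivity) hcast
          linarith
        have htendμ : Tendsto (fun n : ℕ => μ (Set.Ici (c - c/((n:ℝ)+1)))) atTop
            (𝓝 (μ (Set.Ici c))) := by
          have := tendsto_measure_iInter_atTop (μ := μ)
            (s := fun n : ℕ => Set.Ici (c - c / ((n:ℝ)+1)))
            (fun n => measurableSet_Ici.nullMeasurableSet) htmono ⟨0, measure_ne_top _ _⟩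
          rwa [hInter] at this
        exact ge_of_tendsto htendμ (Filter.Eventually.of_forall hx)
      by_cases hρ : μ (Set.Ici c) = 0
      · have hEempty : E = ∅ := by
          rw [Set.eq_empty_iff_forall_notMem]
          intro ω hω
          obtain ⟨h1, hS1⟩ := key ω hω
          rw [hρ] at h1
          have h2 : 1 / runMax M (tauMu μ M ω).toNat ω ≤ 0 := by
            have := ENNReal.ofReal_eq_zero.1 (le_antisymm h1 zero_le)
            linarith
          have h3 : 0 < 1 / runMax M (tauMu μ M ω).toNat ω :=
            one_div_pos.2 (lt_of_lt_of_le one_pos hS1)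
          linarith
        rw [hEempty, measure_empty]
        exact zero_le
      · have hρNt : μ (Set.Ici c) ≠ ⊤ := measure_ne_top _ _
        set ρ := (μ (Set.Ici c)).toReal with hρdef
        have hρpos : 0 < ρ := ENNReal.toReal_pos hρ hρNt
        have hEsub : E ⊆ {ω | ∃ t, (1/ρ) ≤ M t ω} := by
          intro ω hω
          obtain ⟨h1, hS1⟩ := key ω hω
          have hSpos : (0:ℝ) < runMax M (tauMu μ M ω).toNat ω := lt_of_lt_of_le one_pos hS1
          have h2 : 1 / runMax M (tauMu μ M ω).toNat ω ≤ ρ := by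
            rw [← ENNReal.ofReal_toReal hρNt] at h1
            exact (ENNReal.ofReal_le_ofReal_iff ENNReal.toReal_nonneg).1 h1
          have h3 : 1 / ρ ≤ runMax M (tauMu μ M ω).toNat ω := (one_div_le hSpos hρpos).1 h2
          obtain ⟨t, ht⟩ := exists_runMax_eq (M := M) (tauMu μ M ω).toNat ω
          exact ⟨t, by rw [← ht]; exact h3⟩
        calc P E ≤ P {ω | ∃ t, (1/ρ) ≤ M t ω} := measure_mono hEsub
          _ ≤ ENNReal.ofReal (1 / (1/ρ)) := ville _ (one_div_pos.2 hρpos)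
          _ = μ (Set.Ici c) := by rw [one_div_one_div, hρdef, ENNReal.ofReal_toReal hρNt]
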